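/- arXiv:2310.02871 — 2 statements merged into one kernel-verified Lean document; each statement's English description precedes it below -/
import Mathlib

section
/- If m is even, the group presented by generators b₁, b₂ with the single relation Br^m(b₁,b₂) is isomorphic to the group presented by generators σ, τ with the single relation (στ)^{m/2} = (τσ)^{m/2}, via σ = b₁b₂b₁ and τ = b₁⁻¹. -/
open FreeGroup

/-- The braid relator `Br^m(b₁,b₂)` for even `m`: `(b₁b₂)^{m/2} ((b₂b₁)^{m/2})⁻¹`. -/
def braidRelator (m : ℕ) : FreeGroup (Fin 2) :=
  ((of 0 * of 1) ^ (m / 2) * (of 0) ^ (m % 2)) *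
    ((of 1 * of 0) ^ (m / 2) * (of 1) ^ (m % 2))⁻¹

/-- The relator `(στ)^{m/2} ((τσ)^{m/2})⁻¹` for `⟨σ,τ | (στ)^{m/2} = (τσ)^{m/2}⟩`. -/
def sigmaTauRelator (m : ℕ) : FreeGroup (Fin 2) :=
  (of 0 * of 1) ^ (m / 2) * ((of 1 * of 0) ^ (m / 2))⁻¹

lemma mk_of_eq {α : Type*} (rels : Set (FreeGroup α)) (x : α) :
    PresentedGroup.mk rels (FreeGroup.of x) = PresentedGroup.of x := rfl

lemma relator_eq_one {α : Type*} (rels : Set (FreeGroup α)) {r : FreeGroup α} (hr : r ∈ rels) :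
    (PresentedGroup.mk rels r) = 1 :=
  (QuotientGroup.eq_one_iff r).2 (Subgroup.subset_normalClosure hr)

theorem dihedral_artin_iso_even (m : ℕ) (hm : Even m) (h2 : 2 ≤ m) :
    ∃ e : PresentedGroup ({sigmaTauRelator m} : Set (FreeGroup (Fin 2))) ≃*
        PresentedGroup ({braidRelator m} : Set (FreeGroup (Fin 2))),
      e (PresentedGroup.of 0) =
        PresentedGroup.of 0 * PresentedGroup.of 1 * PresentedGroup.of 0 ∧
      e (PresentedGroup.of 1) = (PresentedGroup.of 0 : PresentedGroup _)⁻¹ := by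
  have hmod : m % 2 = 0 := Nat.even_iff.1 hm
  set k := m / 2 with hk
  set B := PresentedGroup ({braidRelator m} : Set (FreeGroup (Fin 2))) with hB
  set S := PresentedGroup ({sigmaTauRelator m} : Set (FreeGroup (Fin 2))) with hS
  have keyB : ((PresentedGroup.of 0 * PresentedGroup.of 1 : B)) ^ k =
      (PresentedGroup.of 1 * PresentedGroup.of 0) ^ k := by
    have := relator_eq_one ({braidRelator m} : Set (FreeGroup (Fin 2)))
      (r := ((of 0 * of 1) ^ (m / 2) * (of 0) ^ (m % 2)) * ((of 1 * of 0) ^ (m / 2) * (of 1) ^ (m % 2))⁻¹) rfl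
    simp only [hmod, pow_zero, mul_one, _root_.map_mul, map_pow, _root_.map_inv,
      mul_inv_eq_one, mk_of_eq] at this
    exact this
  have keyS : ((PresentedGroup.of 0 * PresentedGroup.of 1 : S)) ^ k =
      (PresentedGroup.of 1 * PresentedGroup.of 0) ^ k := by
    have := relator_eq_one ({sigmaTauRelator m} : Set (FreeGroup (Fin 2)))
      (r := (of 0 * of 1) ^ (m / 2) * ((of 1 * of 0) ^ (m / 2))⁻¹) rfl
    simp only [_root_.map_mul, map_pow, _root_.map_inv, mul_inv_eq_one, mk_of_eq] at this
    exact this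
  let f : Fin 2 → B := ![PresentedGroup.of 0 * PresentedGroup.of 1 * PresentedGroup.of 0,
    (PresentedGroup.of 0)⁻¹]
  let g : Fin 2 → S := ![(PresentedGroup.of 1)⁻¹,
    PresentedGroup.of 1 * PresentedGroup.of 0 * PresentedGroup.of 1]
  have hf : ∀ r ∈ ({sigmaTauRelator m} : Set (FreeGroup (Fin 2))), FreeGroup.lift f r = 1 := by
    intro r hr
    rw [Set.mem_singleton_iff] at hr
    subst hr
    have e1 : f 0 * f 1 = PresentedGroup.of 0 * PresentedGroup.of 1 := by
      simp [f]
    have e2 : f 1 * f 0 = PresentedGroup.of 1 * PresentedGroup.of 0 := by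
      simp [f]; group
    simp only [sigmaTauRelator, _root_.map_mul, map_pow, _root_.map_inv, FreeGroup.lift_apply_of, e1, e2,
      mul_inv_eq_one, keyB]
    exact keyB
  have hg : ∀ r ∈ ({braidRelator m} : Set (FreeGroup (Fin 2))), FreeGroup.lift g r = 1 := by
    intro r hr
    rw [Set.mem_singleton_iff] at hr
    subst hr
    have e1 : g 0 * g 1 = PresentedGroup.of 0 * PresentedGroup.of 1 := by
      simp [g]; group
    have e2 : g 1 * g 0 = PresentedGroup.of 1 * PresentedGroup.of 0 := by
      simp [g]
    simp only [braidRelator, hmod, pow_zero, mul_one, _root_.map_mul, map_pow, _root_.map_inv,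
      FreeGroup.lift_apply_of, e1, e2, mul_inv_eq_one, keyS]
    exact keyS
  let φ := PresentedGroup.toGroup hf
  let ψ := PresentedGroup.toGroup hg
  have h1 : ψ.comp φ = MonoidHom.id S := by
    ext x
    fin_cases x <;> simp [φ, ψ, f, g] <;> group <;> rfl
  have h2 : φ.comp ψ = MonoidHom.id B := by
    ext x
    fin_cases x <;> simp [φ, ψ, f, g] <;> group <;> rfl
  refine ⟨MonoidHom.toMulEquiv φ ψ h1 h2, ?_, ?_⟩ <;>
    simp [MonoidHom.toMulEquiv, φ, f]
end

section
/- For odd m ≥ 3, in the free group on a, b, let u = (ab)^{(m-1)/2}a and v = ab. Then the normal closure of the element Br^m(a,b)-relator (aba⋯a)(bab⋯b)⁻¹ (alternating words of length m) equals the normal closure of u²v^{-m}. -/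
open FreeGroup

private lemma semiconj_pow {G : Type*} [Group G] (A B : G) (k : ℕ) :
    B * (A * B) ^ k = (B * A) ^ k * B :=
  (show SemiconjBy B (A * B) (B * A) by
    simp [SemiconjBy, mul_assoc]).pow_right k

private lemma pow_two_k_one {G : Type*} [Group G] (A B : G) (k : ℕ) :
    (A * B) ^ (2 * k + 1) = (A * B) ^ k * (A * B * (A * B) ^ k) := by
  rw [show 2 * k + 1 = k + (k + 1) by ring, pow_add, pow_succ']

private lemma key_identity {G : Type*} [Group G] (A B : G) (k : ℕ) :
    ((A * B) ^ k * A) * ((B * A) ^ k * B) = (A * B) ^ (2 * k + 1) := by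
  rw [← semiconj_pow A B k, pow_two_k_one]
  simp [mul_assoc]

private lemma braid_to_torus {G : Type*} [Group G] (A B : G) (k : ℕ)
    (h : ((A * B) ^ k * A) * ((B * A) ^ k * B)⁻¹ = 1) :
    ((A * B) ^ k * A) ^ 2 * ((A * B) ^ (2 * k + 1))⁻¹ = 1 := by
  rw [mul_inv_eq_one] at h
  rw [mul_inv_eq_one, sq]
  calc ((A * B) ^ k * A) * ((A * B) ^ k * A)
      = ((A * B) ^ k * A) * ((B * A) ^ k * B) := congrArg (((A * B) ^ k * A) * ·) h
    _ = (A * B) ^ (2 * k + 1) := key_identity A B k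

private lemma torus_to_braid {G : Type*} [Group G] (A B : G) (k : ℕ)
    (h : ((A * B) ^ k * A) ^ 2 * ((A * B) ^ (2 * k + 1))⁻¹ = 1) :
    ((A * B) ^ k * A) * ((B * A) ^ k * B)⁻¹ = 1 := by
  rw [mul_inv_eq_one, sq, ← key_identity A B k] at h
  rw [mul_inv_eq_one]
  exact mul_left_cancel h

theorem normal_closure_braid_eq_torus_odd (m : ℕ) (hm : Odd m) (h3 : 3 ≤ m) :
    letI a : FreeGroup (Fin 2) := of 0
    letI b : FreeGroup (Fin 2) := of 1
    letI u : FreeGroup (Fin 2) := (a * b) ^ ((m - 1) / 2) * a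
    letI v : FreeGroup (Fin 2) := a * b
    Subgroup.normalClosure
        ({((a * b) ^ ((m - 1) / 2) * a) * (((b * a) ^ ((m - 1) / 2) * b))⁻¹} :
          Set (FreeGroup (Fin 2))) =
      Subgroup.normalClosure ({u ^ 2 * (v ^ m)⁻¹} : Set (FreeGroup (Fin 2))) := by
  obtain ⟨k, hk⟩ := hm
  have hk2 : (m - 1) / 2 = k := by omega
  have hm2 : m = 2 * k + 1 := by omega
  subst hm2
  rw [hk2]
  set a : FreeGroup (Fin 2) := of 0
  set b : FreeGroup (Fin 2) := of 1
  set r : FreeGroup (Fin 2) := ((a * b) ^ k * a) * ((b * a) ^ k * b)⁻¹ with hr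
  set t : FreeGroup (Fin 2) := ((a * b) ^ k * a) ^ 2 * ((a * b) ^ (2 * k + 1))⁻¹ with ht
  show Subgroup.normalClosure {r} = Subgroup.normalClosure {t}
  apply le_antisymm
  · apply Subgroup.normalClosure_le_normal
    rw [Set.singleton_subset_iff, SetLike.mem_coe, ← QuotientGroup.eq_one_iff]
    have hone : (QuotientGroup.mk' (Subgroup.normalClosure {t}) t) = 1 := by
      rw [QuotientGroup.mk'_apply, QuotientGroup.eq_one_iff]
      exact Subgroup.subset_normalClosure rfl
    rw [ht] at hone
    simp only [_root_.map_mul, _root_.map_pow, _root_.map_inv] at hone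
    show QuotientGroup.mk' (Subgroup.normalClosure {t}) r = 1
    rw [hr]
    simp only [_root_.map_mul, _root_.map_pow, _root_.map_inv]
    exact torus_to_braid _ _ k hone
  · apply Subgroup.normalClosure_le_normal
    rw [Set.singleton_subset_iff, SetLike.mem_coe, ← QuotientGroup.eq_one_iff]
    have hone : (QuotientGroup.mk' (Subgroup.normalClosure {r}) r) = 1 := by
      rw [QuotientGroup.mk'_apply, QuotientGroup.eq_one_iff]
      exact Subgroup.subset_normalClosure rfl
    rw [hr] at hone
    simp only [_root_.map_mul, _root_.map_pow, _root_.map_inv] at hone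
    show QuotientGroup.mk' (Subgroup.normalClosure {r}) t = 1
    rw [ht]
    simp only [_root_.map_mul, _root_.map_pow, _root_.map_inv]
    exact braid_to_torus _ _ k hone
end
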